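/- Let A and B be nonempty subsets of a metric space (X,d). Then the pair (A,B) satisfies property UC if and only if for every ε > 0 there exists δ > 0 such that diam(A ∩ B̄(y, dist(A,B) + δ)) ≤ ε for every y ∈ B, where B̄(y,r) denotes the closed ball of center y and radius r. -/

import Mathlib

open Filter Metric

/-- The distance between two sets: `inf {d(x,y) : x ∈ A, y ∈ B}`. -/
noncomputable def setDist {X : Type*} [PseudoMetricSpace X] (A B : Set X) : ℝ :=
  sInf (Set.image2 dist A B)

/-- Property UC for a pair of subsets of a metric space. -/
def PropUC {X : Type*} [MetricSpace X] (A B : Set X) : Prop :=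
  ∀ x x' y : ℕ → X, (∀ n, x n ∈ A) → (∀ n, x' n ∈ A) → (∀ n, y n ∈ B) →
    Tendsto (fun n => dist (x n) (y n)) atTop (nhds (setDist A B)) →
    Tendsto (fun n => dist (x' n) (y n)) atTop (nhds (setDist A B)) →
    Tendsto (fun n => dist (x n) (x' n)) atTop (nhds 0)

theorem prop_UC_iff_uniform_diam {X : Type*} [MetricSpace X] (A B : Set X)
    (hA : A.Nonempty) (hB : B.Nonempty) :
    PropUC A B ↔
      ∀ ε > 0, ∃ δ > 0, ∀ y ∈ B,
        Metric.diam (A ∩ Metric.closedBall y (setDist A B + δ)) ≤ ε := by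
  have hle : ∀ x ∈ A, ∀ y ∈ B, setDist A B ≤ dist x y := by
    intro x hx y hy
    exact csInf_le ⟨0, by rintro r ⟨a, ha, b, hb, rfl⟩; positivity⟩
      ⟨x, hx, y, hy, rfl⟩
  constructor
  · intro hUC ε hε
    by_contra h
    push_neg at h
    choose y hyB hy using fun n : ℕ => h (1 / (n + 1) : ℝ) (by positivity)
    have hx : ∀ n, ∃ x ∈ A ∩ closedBall (y n) (setDist A B + 1 / (n + 1)),
        ∃ x' ∈ A ∩ closedBall (y n) (setDist A B + 1 / (n + 1)), ε < dist x x' := by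
      intro n
      by_contra hc
      push_neg at hc
      exact absurd (Metric.diam_le_of_forall_dist_le hε.le
        (fun a ha b hb => hc a ha b hb)) (not_le.2 (hy n))
    choose x hxmem x' hx'mem hxx' using hx
    have hbnd : Tendsto (fun n : ℕ => setDist A B + 1 / (n + 1)) atTop
        (nhds (setDist A B)) := by
      have := tendsto_one_div_add_atTop_nhds_zero_nat (𝕜 := ℝ)
      have h2 := (tendsto_const_nhds (x := setDist A B) (f := atTop)).add this
      simpa using h2
    have h1 : Tendsto (fun n => dist (x n) (y n)) atTop (nhds (setDist A B)) :=
      tendsto_of_tendsto_of_tendsto_of_le_of_le tendsto_const_nhds hbnd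
        (fun n => hle _ (hxmem n).1 _ (hyB n)) (fun n => (hxmem n).2)
    have h2 : Tendsto (fun n => dist (x' n) (y n)) atTop (nhds (setDist A B)) :=
      tendsto_of_tendsto_of_tendsto_of_le_of_le tendsto_const_nhds hbnd
        (fun n => hle _ (hx'mem n).1 _ (hyB n)) (fun n => (hx'mem n).2)
    have h3 := hUC x x' y (fun n => (hxmem n).1) (fun n => (hx'mem n).1) hyB h1 h2
    have h4 : ∀ᶠ n in atTop, dist (x n) (x' n) < ε := by
      have := Metric.tendsto_nhds.1 h3 ε hε
      filter_upwards [this] with n hn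
      rwa [Real.dist_eq, sub_zero, abs_of_nonneg dist_nonneg] at hn
    obtain ⟨n, hn⟩ := h4.exists
    exact absurd (hxx' n) (not_lt.2 hn.le)
  · intro h x x' y hxA hx'A hyB hx hx'
    rw [Metric.tendsto_nhds]
    intro ε hε
    obtain ⟨δ, hδ, hdiam⟩ := h (ε / 2) (half_pos hε)
    have hlt : setDist A B < setDist A B + δ := lt_add_of_pos_right _ hδ
    filter_upwards [hx.eventually_lt_const hlt, hx'.eventually_lt_const hlt]
      with n h1 h2
    have hb : Bornology.IsBounded (A ∩ closedBall (y n) (setDist A B + δ)) :=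
      (isBounded_closedBall).subset Set.inter_subset_right
    have hd : dist (x n) (x' n) ≤ ε / 2 :=
      le_trans (Metric.dist_le_diam_of_mem hb ⟨hxA n, mem_closedBall.2 h1.le⟩
        ⟨hx'A n, mem_closedBall.2 h2.le⟩) (hdiam (y n) (hyB n))
    rw [Real.dist_eq, sub_zero, abs_of_nonneg dist_nonneg]
    linarith
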